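/- Let d ≥ 2 and t ≥ 1 be integers and let ε be a real number with 0 < ε ≤ d and t ≥ e·d·ln(d/ε). Consider a random t × d binary matrix whose t·d entries are independent, each equal to 1 with probability 1/d and 0 with probability 1 − 1/d. Then with probability at least 1 − ε, for every column index j ∈ {1,…,d} there exists a row i such that the entry in position (i,j) is 1 and the entries in positions (i,j') are 0 for all j' ≠ j; in particular, with probability at least 1 − ε the d columns contain a d × d identity matrix. -/

import Mathlib

open MeasureTheory ENNReal

private lemma stmt15_real_ineq (d t : ℕ) (hd : 2 ≤ d) (ht : 1 ≤ t) (ε : ℝ) (hε : 0 < ε)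
    (hεd : ε ≤ d) (htb : Real.exp 1 * d * Real.log (d / ε) ≤ t) :
    (d : ℝ) * (1 - (d : ℝ)⁻¹ * (1 - (d : ℝ)⁻¹) ^ (d - 1)) ^ t ≤ ε := by
  have hd0 : (0:ℝ) < d := by positivity
  have hq0 : (0:ℝ) < (d:ℝ)⁻¹ := by positivity
  have hq1 : (d:ℝ)⁻¹ ≤ 1 := by
    rw [inv_le_one_iff₀]; right; exact_mod_cast le_trans one_le_two hd
  have h1q : (0:ℝ) ≤ 1 - (d:ℝ)⁻¹ := by linarith
  -- step 1 : exp (-1) ≤ (1 - 1/d)^(d-1)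
  have hdm1 : (0:ℝ) < (d:ℝ) - 1 := by
    have : (2:ℝ) ≤ d := by exact_mod_cast hd
    linarith
  have key1 : ((d:ℝ)/((d:ℝ)-1)) ^ (d-1) ≤ Real.exp 1 := by
    have h : (d:ℝ)/((d:ℝ)-1) = 1/((d:ℝ)-1) + 1 := by field_simp; ring
    rw [h]
    calc (1/((d:ℝ)-1) + 1) ^ (d-1) ≤ (Real.exp (1/((d:ℝ)-1))) ^ (d-1) := by
          apply pow_le_pow_left₀ (by positivity) (Real.add_one_le_exp _)
      _ = Real.exp ((d-1 : ℕ) * (1/((d:ℝ)-1))) := by rw [← Real.exp_nat_mul]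
      _ = Real.exp 1 := by
          congr 1
          have : ((d-1 : ℕ) : ℝ) = (d:ℝ) - 1 := by
            have : 1 ≤ d := le_trans one_le_two hd
            push_cast [this]; ring
          rw [this]; field_simp
  have step1 : Real.exp (-1) ≤ (1 - (d:ℝ)⁻¹) ^ (d-1) := by
    have h1 : 1 - (d:ℝ)⁻¹ = ((d:ℝ)/((d:ℝ)-1))⁻¹ := by field_simp
    rw [h1, inv_pow, Real.exp_neg]
    exact inv_anti₀ (by positivity) key1
  set pr := (d:ℝ)⁻¹ * (1 - (d:ℝ)⁻¹) ^ (d-1) with hpr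
  have hpr0 : 0 < pr := by
    apply mul_pos hq0
    apply pow_pos
    have h2 : (2:ℝ) ≤ d := by exact_mod_cast hd
    have : (d:ℝ)⁻¹ < 1 := by
      rw [inv_lt_one_iff₀]; right; linarith
    linarith
  have hpr1 : pr ≤ 1 := by
    calc pr ≤ (d:ℝ)⁻¹ * 1 := by
          apply mul_le_mul_of_nonneg_left _ hq0.le
          exact pow_le_one₀ h1q (by linarith)
      _ ≤ 1 := by rw [mul_one]; exact hq1
  have hprlb : Real.exp (-1) * (d:ℝ)⁻¹ ≤ pr := by
    rw [hpr, mul_comm ((d:ℝ)⁻¹)]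
    exact mul_le_mul_of_nonneg_right step1 hq0.le
  -- (1 - pr)^t ≤ exp (-(pr * t))
  have step2 : (1 - pr) ^ t ≤ Real.exp (-(pr * t)) := by
    calc (1 - pr) ^ t ≤ (Real.exp (-pr)) ^ t := by
          apply pow_le_pow_left₀ (by linarith)
          linarith [Real.add_one_le_exp (-pr)]
      _ = Real.exp (-pr * t) := by rw [← Real.exp_nat_mul]; ring_nf
      _ = Real.exp (-(pr * t)) := by ring_nf
  -- exp (-(pr * t)) ≤ ε / d
  have hlog0 : 0 ≤ Real.log ((d:ℝ)/ε) := by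
    apply Real.log_nonneg
    rw [le_div_iff₀ hε]; linarith
  have step3 : Real.log ((d:ℝ)/ε) ≤ pr * t := by
    have h1 : Real.exp 1 * d * Real.log ((d:ℝ)/ε) ≤ t := htb
    have h2 : Real.log ((d:ℝ)/ε) ≤ (Real.exp (-1) * (d:ℝ)⁻¹) * t := by
      rw [Real.exp_neg]
      calc Real.log ((d:ℝ)/ε) = (Real.exp 1 * d * Real.log ((d:ℝ)/ε)) / (Real.exp 1 * d) := by
            field_simp
        _ ≤ t / (Real.exp 1 * d) := by
            gcongr
        _ = (Real.exp 1)⁻¹ * (d:ℝ)⁻¹ * t := by field_simp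
    calc Real.log ((d:ℝ)/ε) ≤ (Real.exp (-1) * (d:ℝ)⁻¹) * t := h2
      _ ≤ pr * t := by
          apply mul_le_mul_of_nonneg_right hprlb (by positivity)
  have step4 : Real.exp (-(pr * t)) ≤ ε / d := by
    have : Real.exp (-(pr * t)) ≤ Real.exp (-Real.log ((d:ℝ)/ε)) := by
      apply Real.exp_le_exp.mpr; linarith
    calc Real.exp (-(pr * t)) ≤ Real.exp (-Real.log ((d:ℝ)/ε)) := this
      _ = ε / d := by
          rw [Real.exp_neg, Real.exp_log (by positivity)]
          field_simp
  calc (d:ℝ) * (1 - pr) ^ t ≤ (d:ℝ) * (ε / d) := by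
        apply mul_le_mul_of_nonneg_left _ hd0.le
        linarith [step2, step4]
    _ = ε := by field_simp

private lemma stmt15_singleton (d : ℕ) (h : ((d : NNReal))⁻¹ ≤ 1) (j : Fin d) :
    (Measure.pi fun _ : Fin d => (PMF.bernoulli ((d : NNReal))⁻¹ h).toMeasure)
      {fun j' : Fin d => decide (j' = j)} =
      (d : ℝ≥0∞)⁻¹ * (1 - (d : ℝ≥0∞)⁻¹) ^ (d - 1) := by
  set ν := (PMF.bernoulli ((d : NNReal))⁻¹ h).toMeasure with hν
  have hdne : (d : NNReal) ≠ 0 := by exact_mod_cast (Fin.pos j).ne'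
  have hsing : ({fun j' : Fin d => decide (j' = j)} : Set (Fin d → Bool)) =
      Set.univ.pi fun j' => {decide (j' = j)} := by
    ext f
    simp [funext_iff, Set.mem_pi]
  rw [hsing, Measure.pi_pi]
  have htrue : ν {true} = (d : ℝ≥0∞)⁻¹ := by
    rw [hν, PMF.toMeasure_apply_singleton _ _ (measurableSet_singleton _), PMF.bernoulli_apply]
    simp [ENNReal.coe_sub, ENNReal.coe_inv hdne]
  have hfalse : ν {false} = 1 - (d : ℝ≥0∞)⁻¹ := by
    rw [hν, PMF.toMeasure_apply_singleton _ _ (measurableSet_singleton _), PMF.bernoulli_apply]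
    simp [ENNReal.coe_sub, ENNReal.coe_inv hdne]
  have : ∀ j' : Fin d, ν {decide (j' = j)} =
      if j' = j then (d : ℝ≥0∞)⁻¹ else 1 - (d : ℝ≥0∞)⁻¹ := by
    intro j'
    by_cases hj : j' = j <;> simp [hj, htrue, hfalse]
  simp_rw [this]
  rw [← Finset.mul_prod_erase Finset.univ _ (Finset.mem_univ j)]
  rw [if_pos rfl]
  congr 1
  rw [Finset.prod_ite_of_false, Finset.prod_const, Finset.card_erase_of_mem (Finset.mem_univ j),
    Finset.card_univ, Fintype.card_fin]
  intro x hx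
  exact Finset.ne_of_mem_erase hx

private lemma stmt15_main (d t : ℕ) (hd : 2 ≤ d) (ht : 1 ≤ t) (ε : ℝ) (hε : 0 < ε)
    (hεd : ε ≤ d) (htb : Real.exp 1 * d * Real.log (d / ε) ≤ t)
    (h : ((d : NNReal))⁻¹ ≤ 1) :
    ENNReal.ofReal (1 - ε) ≤
      (Measure.pi fun _ : Fin t => Measure.pi fun _ : Fin d =>
        (PMF.bernoulli ((d : NNReal))⁻¹ h).toMeasure)
      {M : Fin t → Fin d → Bool | ∀ j : Fin d, ∃ i : Fin t,
        M i j = true ∧ ∀ j' : Fin d, j' ≠ j → M i j' = false} := by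
  set ν : Measure Bool := (PMF.bernoulli ((d : NNReal))⁻¹ h).toMeasure with hν
  set ρ : Measure (Fin d → Bool) := Measure.pi fun _ => ν with hρ
  set μ : Measure (Fin t → Fin d → Bool) := Measure.pi fun _ => ρ with hμ
  haveI : IsProbabilityMeasure ν := PMF.toMeasure.isProbabilityMeasure _
  haveI : IsProbabilityMeasure ρ := by rw [hρ]; infer_instance
  haveI : IsProbabilityMeasure μ := by rw [hμ]; infer_instance
  set g : Fin d → (Fin d → Bool) := fun j j' => decide (j' = j) with hg
  set S : Set (Fin t → Fin d → Bool) := {M | ∀ j : Fin d, ∃ i : Fin t,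
      M i j = true ∧ ∀ j' : Fin d, j' ≠ j → M i j' = false} with hS
  -- rewrite S via g
  have hSg : S = {M | ∀ j : Fin d, ∃ i : Fin t, M i = g j} := by
    ext M
    simp only [hS, hg, Set.mem_setOf_eq]
    apply forall_congr'; intro j
    apply exists_congr; intro i
    constructor
    · rintro ⟨h1, h2⟩
      funext j'
      by_cases hj : j' = j
      · subst hj; simp [h1]
      · simp [hj, h2 j' hj]
    · intro hMg
      constructor
      · rw [hMg]; simp
      · intro j' hj'; rw [hMg]; simp [hj']
  set B : Fin d → Set (Fin t → Fin d → Bool) :=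
    fun j => Set.univ.pi fun _ : Fin t => ({g j}ᶜ : Set (Fin d → Bool)) with hB
  have hcompl : Sᶜ = ⋃ j, B j := by
    rw [hSg]
    ext M
    simp [hB, Set.mem_pi, not_exists]
  -- measure of B j
  have hBj : ∀ j, μ (B j) = (1 - (d : ℝ≥0∞)⁻¹ * (1 - (d : ℝ≥0∞)⁻¹) ^ (d - 1)) ^ t := by
    intro j
    rw [hμ, hB, Measure.pi_pi]
    have hone : ρ ({g j}ᶜ) = 1 - (d : ℝ≥0∞)⁻¹ * (1 - (d : ℝ≥0∞)⁻¹) ^ (d - 1) := by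
      rw [prob_compl_eq_one_sub (Set.toFinite _).measurableSet]
      rw [hρ, hg]
      rw [stmt15_singleton d h j]
    simp [hone, Finset.prod_const]
  -- union bound
  have hcomplle : μ Sᶜ ≤ ENNReal.ofReal ε := by
    rw [hcompl]
    calc μ (⋃ j, B j) ≤ ∑ j : Fin d, μ (B j) := measure_iUnion_fintype_le _ _
      _ = (d : ℝ≥0∞) * (1 - (d : ℝ≥0∞)⁻¹ * (1 - (d : ℝ≥0∞)⁻¹) ^ (d - 1)) ^ t := by
          simp [hBj, Finset.sum_const, mul_comm]
      _ ≤ ENNReal.ofReal ε := by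
          have hd0 : (0:ℝ) < d := by positivity
          have hq0 : (0:ℝ) ≤ (d:ℝ)⁻¹ := by positivity
          have hq1 : ((d:ℝ))⁻¹ ≤ 1 := by
            rw [inv_le_one_iff₀]; right; exact_mod_cast le_trans one_le_two hd
          have e1 : (d : ℝ≥0∞)⁻¹ = ENNReal.ofReal ((d:ℝ)⁻¹) := by
            rw [ENNReal.ofReal_inv_of_pos hd0, ENNReal.ofReal_natCast]
          have e2 : (1 : ℝ≥0∞) - (d : ℝ≥0∞)⁻¹ = ENNReal.ofReal (1 - (d:ℝ)⁻¹) := by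
            rw [ENNReal.ofReal_sub _ hq0, ENNReal.ofReal_one, e1]
          have hpr0 : (0:ℝ) ≤ (d:ℝ)⁻¹ * (1 - (d:ℝ)⁻¹) ^ (d - 1) := by
            apply mul_nonneg hq0
            apply pow_nonneg; linarith
          have e3 : (d : ℝ≥0∞)⁻¹ * (1 - (d : ℝ≥0∞)⁻¹) ^ (d - 1) =
              ENNReal.ofReal ((d:ℝ)⁻¹ * (1 - (d:ℝ)⁻¹) ^ (d - 1)) := by
            rw [ENNReal.ofReal_mul hq0, ENNReal.ofReal_pow (by linarith), e2, e1]
          have hpr1 : (d:ℝ)⁻¹ * (1 - (d:ℝ)⁻¹) ^ (d - 1) ≤ 1 := by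
            calc (d:ℝ)⁻¹ * (1 - (d:ℝ)⁻¹) ^ (d - 1) ≤ 1 * 1 := by
                  apply mul_le_mul hq1 (pow_le_one₀ (by linarith) (by linarith)) _ one_pos.le
                  apply pow_nonneg; linarith
              _ = 1 := one_mul 1
          have e4 : (1 : ℝ≥0∞) - (d : ℝ≥0∞)⁻¹ * (1 - (d : ℝ≥0∞)⁻¹) ^ (d - 1) =
              ENNReal.ofReal (1 - (d:ℝ)⁻¹ * (1 - (d:ℝ)⁻¹) ^ (d - 1)) := by
            rw [ENNReal.ofReal_sub _ hpr0, ENNReal.ofReal_one, e3]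
          rw [e4, ← ENNReal.ofReal_pow (by linarith), ← ENNReal.ofReal_natCast d,
            ← ENNReal.ofReal_mul (by positivity)]
          exact ENNReal.ofReal_le_ofReal
            (stmt15_real_ineq d t hd ht ε hε hεd htb)
  -- conclude
  show ENNReal.ofReal (1 - ε) ≤ μ S
  have : μ S = 1 - μ Sᶜ := by
    conv_lhs => rw [← compl_compl S]
    rw [prob_compl_eq_one_sub (Set.toFinite _).measurableSet]
  rw [this, ENNReal.ofReal_sub _ hε.le, ENNReal.ofReal_one]
  exact tsub_le_tsub_left hcomplle 1

theorem stmt15 (d t : ℕ) (hd : 2 ≤ d) (ht : 1 ≤ t) (ε : ℝ) (hε : 0 < ε)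
    (hεd : ε ≤ d) (htb : Real.exp 1 * d * Real.log (d / ε) ≤ t)
    (μ : Measure (Fin t → Fin d → Bool))
    (hμ : μ = Measure.pi fun _ : Fin t => Measure.pi fun _ : Fin d =>
      (PMF.bernoulli ((d : NNReal))⁻¹
        (by
          apply inv_le_one_of_one_le₀
          exact_mod_cast le_trans one_le_two hd)).toMeasure) :
    ENNReal.ofReal (1 - ε) ≤
      μ {M : Fin t → Fin d → Bool | ∀ j : Fin d, ∃ i : Fin t,
        M i j = true ∧ ∀ j' : Fin d, j' ≠ j → M i j' = false} := by
  rw [hμ]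
  exact stmt15_main d t hd ht ε hε hεd htb _
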